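/- Fix an integer r ≥ 2, an integer n ≥ 2, and set L = (n−1)(r−1) + 1. For every tuple (a_1, …, a_n) ∈ 𝓔_n(L), the identity Σ_{k=0}^{L} (−1)^k [L ¦ k] · ∏_{i=1}^{n−1} A(k − x_i, r − a_i) = 0 holds in ℚ(q), where x_i = a_1 + ⋯ + a_{i−1} (so x_1 = 0). -/

import Mathlib

noncomputable section

open Finset

/-- The field `ℚ(q)` of rational functions. -/
abbrev K : Type := RatFunc ℚ

/-- The variable `q`. -/
def q : K := RatFunc.X

/-- The balanced `q`-integer `[n] = (q^n - q^{-n})/(q - q^{-1})`. -/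
def qint (n : ℤ) : K := (q ^ n - q ^ (-n)) / (q - q⁻¹)

/-- The `q`-factorial `[m]! = [1][2]⋯[m]`. -/
def qfact (m : ℕ) : K := ∏ t ∈ Finset.range m, qint (t + 1)

/-- The `q`-binomial coefficient `[n ¦ m] = [n][n-1]⋯[n-m+1]/[m]!`. -/
def qbinom (n : ℤ) (m : ℕ) : K := (∏ t ∈ Finset.range m, qint (n - t)) / qfact m

/-- The coefficient `A(k,s) = [s+k−r−1 ¦ s−1] · [k ¦ r−s]`. -/
def Acoef (r : ℕ) (k : ℤ) (s : ℕ) : K := qbinom ((s : ℤ) + k - (r : ℤ) - 1) (s - 1) * qbinom k (r - s)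

/-- Entry access for a tuple, with out-of-range positions reading `0`. -/
def aget {n : ℕ} (a : Fin n → ℕ) (t : ℕ) : ℕ := if h : t < n then a ⟨t, h⟩ else 0

/-- The finite set `𝓔_n(m)` of tuples with entry sum `m` and all entries except
possibly the last one lying in `[0, r−1]`. -/
def ESet (r n m : ℕ) : Finset (Fin n → ℕ) :=
  (Fintype.piFinset fun _ : Fin n => Finset.range (m + 1)).filter
    (fun a => (∑ t, a t) = m ∧ ∀ t : Fin n, t.val < n - 1 → a t ≤ r - 1)

/-! ### Basic facts about `q` -/

lemma q_ne_zero : q ≠ 0 := RatFunc.X_ne_zero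

lemma q_pow_ne_one (m : ℕ) (hm : m ≠ 0) : q ^ m ≠ 1 := by
  intro h
  have : (Polynomial.X : Polynomial ℚ) ^ m = 1 := by
    apply RatFunc.algebraMap_injective ℚ
    rw [map_pow, map_one, RatFunc.algebraMap_X]
    exact h
  have := congrArg (Polynomial.eval 0) this
  simp [Polynomial.eval_pow, zero_pow hm] at this

lemma q_zpow_ne_one (m : ℤ) (hm : m ≠ 0) : q ^ m ≠ 1 := by
  rcases lt_or_gt_of_ne hm with h | h
  · intro hc
    have : q ^ (-m) = 1 := by
      rw [zpow_neg, hc, inv_one]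
    rw [show (-m) = ((-m).toNat : ℤ) by omega, zpow_natCast] at this
    exact q_pow_ne_one _ (by omega) this
  · intro hc
    rw [show m = (m.toNat : ℤ) by omega, zpow_natCast] at hc
    exact q_pow_ne_one _ (by omega) hc

lemma qq_ne : q - q⁻¹ ≠ 0 := by
  intro h
  have h2 : q * q - q * q⁻¹ = 0 := by rw [← mul_sub, h, mul_zero]
  rw [mul_inv_cancel₀ q_ne_zero] at h2
  have : q ^ (2:ℤ) = 1 := by
    rw [zpow_two]; linear_combination h2
  exact q_zpow_ne_one 2 (by norm_num) this

lemma qint_ne_zero (n : ℤ) (h : n ≠ 0) : qint n ≠ 0 := by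
  unfold qint
  apply div_ne_zero _ qq_ne
  intro hc
  have : q ^ n * q ^ n - q ^ n * q ^ (-n) = 0 := by rw [← mul_sub, hc, mul_zero]
  rw [← zpow_add₀ q_ne_zero, ← zpow_add₀ q_ne_zero, add_neg_cancel, zpow_zero] at this
  have : q ^ (n + n) = 1 := by linear_combination this
  exact q_zpow_ne_one _ (by omega) this

lemma qint_zero : qint 0 = 0 := by simp [qint]

lemma qfact_ne_zero (m : ℕ) : qfact m ≠ 0 := by
  unfold qfact
  apply Finset.prod_ne_zero_iff.2
  intro t _
  exact qint_ne_zero _ (by positivity)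

lemma qbinom_zero_right (n : ℤ) : qbinom n 0 = 1 := by simp [qbinom, qfact]

lemma qbinom_eq_zero {n : ℤ} {m : ℕ} (h1 : 0 ≤ n) (h2 : n < m) : qbinom n m = 0 := by
  unfold qbinom
  rw [Finset.prod_eq_zero (i := n.toNat) (by simp [Finset.mem_range]; omega), zero_div]
  rw [show n - (n.toNat : ℤ) = 0 by omega, qint_zero]

lemma qint_add (a b : ℤ) : qint (a + b) = q ^ a * qint b + q ^ (-b) * qint a := by
  unfold qint
  rw [mul_div_assoc', mul_div_assoc', ← add_div]
  congr 1
  simp only [zpow_add₀ q_ne_zero, neg_add, zpow_neg]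
  field_simp
  ring

lemma qpow_add (a b : ℤ) : q ^ (a + b) = q ^ a * q ^ b := zpow_add₀ q_ne_zero a b

/-! ### Pascal's rule for the balanced `q`-binomial -/

lemma qbinom_pascal (n : ℤ) (m : ℕ) :
    qbinom n (m+1) = q ^ ((m:ℤ)+1) * qbinom (n-1) (m+1) + q ^ ((m:ℤ)+1-n) * qbinom (n-1) m := by
  have hP1 : ∏ t ∈ Finset.range (m+1), qint (n - t) = qint n * ∏ t ∈ Finset.range m, qint (n - 1 - t) := by
    rw [Finset.prod_range_succ', mul_comm]
    congr 1
    · norm_num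
    · apply Finset.prod_congr rfl
      intro t _
      congr 1
      push_cast
      ring
  have hP2 : ∏ t ∈ Finset.range (m+1), qint (n - 1 - t) = (∏ t ∈ Finset.range m, qint (n-1-t)) * qint (n-1-m) :=
    Finset.prod_range_succ _ _
  have hF : qfact (m+1) = qfact m * qint ((m:ℤ)+1) := by
    unfold qfact
    rw [Finset.prod_range_succ]
  have key : qint n = q ^ ((m:ℤ)+1) * qint (n-1-(m:ℤ)) + q ^ ((m:ℤ)+1-n) * qint ((m:ℤ)+1) := by
    have := qint_add ((m:ℤ)+1) (n-1-(m:ℤ))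
    rw [show (m:ℤ)+1 + (n-1-(m:ℤ)) = n by ring, show -(n-1-(m:ℤ)) = (m:ℤ)+1-n by ring] at this
    linear_combination this
  unfold qbinom
  rw [hP1, hP2, hF, key]
  have h1 := qfact_ne_zero m
  have h2 := qint_ne_zero ((m:ℤ)+1) (by omega)
  field_simp

/-! ### The key vanishing identity -/

lemma key_vanish : ∀ (L u : ℕ), u < L →
    ∑ k ∈ Finset.range (L+1), (-1:K)^k * qbinom (L:ℤ) k * q ^ (((L:ℤ) - 1 - 2*u) * k) = 0 := by
  intro L
  induction L with
  | zero => intro u hu; omega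
  | succ L ih =>
    intro u hu
    set j : ℤ := (L:ℤ) - 2*u with hj
    have hexp : ((L+1:ℕ):ℤ) - 1 - 2*u = j := by push_cast; ring
    rw [show ((L:ℕ)+1+1) = (L+1)+1 from rfl]
    simp only [hexp]
    set T : K := ∑ k ∈ Finset.range (L+1), (-1:K)^k * qbinom (L:ℤ) k * q ^ ((j+1) * k) with hT
    have main : ∑ k ∈ Finset.range (L+1+1), (-1:K)^k * qbinom ((L+1:ℕ):ℤ) k * q ^ (j * k)
        = T - q ^ (j - L) * T := by
      rw [Finset.sum_range_succ']
      have step : ∀ k : ℕ, (-1:K)^(k+1) * qbinom ((L+1:ℕ):ℤ) (k+1) * q ^ (j * ((k+1:ℕ):ℤ))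
          = (-1:K)^(k+1) * qbinom (L:ℤ) (k+1) * q ^ ((j+1) * ((k+1:ℕ):ℤ))
            - q ^ (j - L) * ((-1:K)^k * qbinom (L:ℤ) k * q ^ ((j+1) * k)) := by
        intro k
        have hp := qbinom_pascal ((L:ℤ)+1) k
        rw [show (L:ℤ)+1-1 = (L:ℤ) by ring] at hp
        push_cast
        rw [hp]
        have e1 : q ^ ((j+1) * ((k:ℤ)+1)) = q ^ (j*((k:ℤ)+1)) * q ^ ((k:ℤ)+1) := by
          rw [← qpow_add]; congr 1; ring
        have e2 : q ^ (j-(L:ℤ)) * q ^ ((j+1)*(k:ℤ)) = q ^ (j*((k:ℤ)+1)) * q ^ (((k:ℤ)+1) - ((L:ℤ)+1)) := by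
          rw [← qpow_add, ← qpow_add]; congr 1; ring
        rw [e1]
        linear_combination ((-1:K)^k * qbinom (L:ℤ) k) * e2
      calc ∑ k ∈ Finset.range (L+1), (-1:K)^(k+1) * qbinom ((L+1:ℕ):ℤ) (k+1) * q ^ (j * ((k+1:ℕ):ℤ))
            + (-1:K)^0 * qbinom ((L+1:ℕ):ℤ) 0 * q ^ (j * ((0:ℕ):ℤ))
          = (∑ k ∈ Finset.range (L+1), ((-1:K)^(k+1) * qbinom (L:ℤ) (k+1) * q ^ ((j+1) * ((k+1:ℕ):ℤ))
              - q ^ (j - L) * ((-1:K)^k * qbinom (L:ℤ) k * q ^ ((j+1) * k))))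
            + (-1:K)^0 * qbinom (L:ℤ) 0 * q ^ ((j+1) * ((0:ℕ):ℤ)) := by
            congr 1
            · exact Finset.sum_congr rfl (fun k _ => step k)
            · simp [qbinom_zero_right]
        _ = (∑ k ∈ Finset.range (L+1), (-1:K)^(k+1) * qbinom (L:ℤ) (k+1) * q ^ ((j+1) * ((k+1:ℕ):ℤ))
              + (-1:K)^0 * qbinom (L:ℤ) 0 * q ^ ((j+1) * ((0:ℕ):ℤ)))
            - q ^ (j - L) * T := by
            rw [Finset.sum_sub_distrib, ← Finset.mul_sum]
            ring
        _ = (∑ k ∈ Finset.range (L+1+1), (-1:K)^k * qbinom (L:ℤ) k * q ^ ((j+1) * k))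
            - q ^ (j - L) * T := by
            conv_rhs => rw [Finset.sum_range_succ']
        _ = T - q ^ (j - L) * T := by
            rw [Finset.sum_range_succ (n := L+1)]
            rw [qbinom_eq_zero (n := (L:ℤ)) (by positivity) (by exact_mod_cast Nat.lt_succ_self L)]
            simp [hT]
    rw [main]
    rcases Nat.eq_zero_or_pos u with hu0 | hu1
    · subst hu0
      rw [show j - (L:ℤ) = 0 by simp [hj], zpow_zero, one_mul, sub_self]
    · have hTz : T = 0 := by
        have h2 : (u-1) < L := by omega
        have := ih (u-1) h2
        rw [show (L:ℤ) - 1 - 2*((u-1:ℕ):ℤ) = j + 1 by rw [hj]; omega] at this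
        exact this
      rw [hTz]; ring

/-! ### Laurent-polynomial ("good") functions of `k` -/

/-- `f : ℕ → K` is `Good d` if `f k = q^{-dk} · p(q^{2k})` for a polynomial `p` of degree `≤ d`. -/
def Good (d : ℕ) (f : ℕ → K) : Prop :=
  ∃ p : Polynomial K, p.natDegree ≤ d ∧
    ∀ k : ℕ, f k = q ^ (-(d:ℤ) * k) * Polynomial.eval (q ^ (2 * (k:ℤ))) p

lemma good_congr {d : ℕ} {f g : ℕ → K} (h : ∀ k, f k = g k) (hf : Good d f) : Good d g := by
  obtain ⟨p, h1, h2⟩ := hf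
  exact ⟨p, h1, fun k => (h k) ▸ h2 k⟩

lemma good_const (c : K) : Good 0 (fun _ => c) :=
  ⟨Polynomial.C c, by simp, fun k => by simp⟩

lemma good_eq {d e : ℕ} {f : ℕ → K} (hf : Good d f) (h : d = e) : Good e f := h ▸ hf

lemma good_mul {d e : ℕ} {f g : ℕ → K} (hf : Good d f) (hg : Good e g) :
    Good (d + e) (fun k => f k * g k) := by
  obtain ⟨p, hp1, hp2⟩ := hf
  obtain ⟨p', hq1, hq2⟩ := hg
  refine ⟨p * p', le_trans (Polynomial.natDegree_mul_le) (add_le_add hp1 hq1), fun k => ?_⟩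
  show f k * g k = _
  rw [hp2, hq2, Polynomial.eval_mul]
  rw [show (-((d+e:ℕ):ℤ) * k) = (-(d:ℤ)*k) + (-(e:ℤ)*k) by push_cast; ring, qpow_add]
  ring

lemma good_qint (c : ℤ) : Good 1 (fun k => qint ((k:ℤ) + c)) := by
  refine ⟨Polynomial.C (q^c / (q - q⁻¹)) * Polynomial.X + Polynomial.C (-(q^(-c)) / (q - q⁻¹)),
    ?_, fun k => ?_⟩
  · apply le_trans (Polynomial.natDegree_add_le _ _)
    rw [max_le_iff]
    constructor
    · exact le_trans (Polynomial.natDegree_C_mul_le _ _) Polynomial.natDegree_X_le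
    · simp
  · simp only [Polynomial.eval_add, Polynomial.eval_mul, Polynomial.eval_C, Polynomial.eval_X]
    unfold qint
    have e1 : q ^ ((k:ℤ)+c) = q ^ (-(1:ℤ)*(k:ℤ)) * q ^ (2*(k:ℤ)) * q ^ c := by
      rw [← qpow_add, ← qpow_add]; congr 1; ring
    have e2 : q ^ (-((k:ℤ)+c)) = q ^ (-(1:ℤ)*(k:ℤ)) * q ^ (-c) := by
      rw [← qpow_add]; congr 1; ring
    rw [e1, e2]
    ring

lemma qbinom_succ (n : ℤ) (m : ℕ) :
    qbinom n (m+1) = qbinom n m * qint (n - m) * (qint ((m:ℤ)+1))⁻¹ := by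
  unfold qbinom qfact
  rw [Finset.prod_range_succ, Finset.prod_range_succ]
  have h1 : (∏ t ∈ Finset.range m, qint ((t:ℤ) + 1)) ≠ 0 := qfact_ne_zero m
  have h2 : qint ((m:ℤ)+1) ≠ 0 := qint_ne_zero _ (by omega)
  field_simp

lemma good_qbinom (c : ℤ) (m : ℕ) : Good m (fun k => qbinom ((k:ℤ) + c) m) := by
  induction m with
  | zero =>
    apply good_congr (f := fun _ => (1:K))
    · intro k; simp [qbinom, qfact]
    · exact good_const 1
  | succ m ih =>
    apply good_congr (f := fun k => (qbinom ((k:ℤ) + c) m * qint ((k:ℤ) + (c - m))) * (qint ((m:ℤ)+1))⁻¹)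
    · intro k
      rw [qbinom_succ ((k:ℤ)+c) m]
      congr 2
      ring
    · have h1 := good_mul (good_mul ih (good_qint (c - (m:ℤ)))) (good_const ((qint ((m:ℤ)+1))⁻¹))
      exact good_eq h1 (by norm_num)

lemma good_prod (N d : ℕ) (F : ℕ → ℕ → K) (h : ∀ t, t < N → Good d (F t)) :
    Good (N * d) (fun k => ∏ t ∈ Finset.range N, F t k) := by
  induction N with
  | zero =>
    apply good_eq (d := 0) _ (by ring)
    exact good_congr (f := fun _ => (1:K)) (fun k => by simp) (good_const 1)
  | succ N ih =>
    apply good_eq (d := N * d + d) _ (by ring)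
    apply good_congr (f := fun k => (∏ t ∈ Finset.range N, F t k) * F N k)
    · intro k; rw [Finset.prod_range_succ]
    · exact good_mul (ih (fun t ht => h t (by omega))) (h N (by omega))

lemma good_Acoef (r : ℕ) (x : ℤ) (s : ℕ) (h1 : 1 ≤ s) (h2 : s ≤ r) :
    Good (r - 1) (fun k => Acoef r ((k:ℤ) - x) s) := by
  have hg := good_mul (good_qbinom ((s:ℤ) - x - r - 1) (s-1)) (good_qbinom (-x) (r-s))
  apply good_eq _ (show (s-1) + (r-s) = r - 1 by omega)
  apply good_congr _ hg
  intro k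
  unfold Acoef
  congr 2
  ring

lemma sum_vanish (L : ℕ) (hL : 1 ≤ L) (f : ℕ → K) (hf : Good (L-1) f) :
    ∑ k ∈ Finset.range (L+1), (-1:K)^k * qbinom (L:ℤ) k * f k = 0 := by
  obtain ⟨p, hdeg, hrep⟩ := hf
  have hdlt : p.natDegree < L := by omega
  calc ∑ k ∈ Finset.range (L+1), (-1:K)^k * qbinom (L:ℤ) k * f k
      = ∑ k ∈ Finset.range (L+1), ∑ t ∈ Finset.range L,
          p.coeff t * ((-1:K)^k * qbinom (L:ℤ) k * q ^ (((L:ℤ) - 1 - 2*((L-1-t:ℕ):ℤ)) * k)) := by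
        apply Finset.sum_congr rfl
        intro k _
        rw [hrep k, Polynomial.eval_eq_sum_range' hdlt, Finset.mul_sum, Finset.mul_sum]
        apply Finset.sum_congr rfl
        intro t ht
        have ht' : t ≤ L - 1 := by simp [Finset.mem_range] at ht; omega
        have e1 : q ^ (-( ((L-1:ℕ)):ℤ) * k) * (q ^ (2 * (k:ℤ)))^t
            = q ^ (((L:ℤ) - 1 - 2*((L-1-t:ℕ):ℤ)) * k) := by
          rw [← zpow_natCast (q ^ (2 * (k:ℤ))) t, ← zpow_mul, ← qpow_add]
          congr 1
          push_cast [Nat.cast_sub ht', Nat.cast_sub (show 1 ≤ L from hL)]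
          ring
        rw [← e1]
        ring
    _ = ∑ t ∈ Finset.range L, p.coeff t * ∑ k ∈ Finset.range (L+1),
          ((-1:K)^k * qbinom (L:ℤ) k * q ^ (((L:ℤ) - 1 - 2*((L-1-t:ℕ):ℤ)) * k)) := by
        rw [Finset.sum_comm]
        exact Finset.sum_congr rfl (fun t _ => (Finset.mul_sum _ _ _).symm)
    _ = 0 := by
        apply Finset.sum_eq_zero
        intro t ht
        rw [key_vanish L (L-1-t) (by simp [Finset.mem_range] at ht; omega), mul_zero]

/-- with `L = (n−1)(r−1)+1`, for every `(a_1,…,a_n) ∈ 𝓔_n(L)`,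
`Σ_{k=0}^{L} (−1)^k [L ¦ k] ∏_{i=1}^{n−1} A(k−x_i, r−a_i) = 0` in `ℚ(q)`,
where `x_i = a_1+⋯+a_{i−1}`. -/
theorem stmt12 (r n : ℕ) (hr : 2 ≤ r) (hn : 2 ≤ n)
    (a : Fin n → ℕ) (ha : a ∈ ESet r n ((n - 1) * (r - 1) + 1)) :
    ∑ k ∈ Finset.range ((n - 1) * (r - 1) + 1 + 1),
      (-1 : K) ^ k * qbinom (((n - 1) * (r - 1) + 1 : ℕ) : ℤ) k *
        ∏ t ∈ Finset.range (n - 1),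
          Acoef r ((k : ℤ) - (∑ u ∈ Finset.range t, (aget a u : ℤ))) (r - aget a t) = 0 := by
  have ha2 : ∀ t : ℕ, t < n - 1 → aget a t ≤ r - 1 := by
    intro t ht
    simp only [ESet, Finset.mem_filter] at ha
    obtain ⟨-, -, h⟩ := ha
    unfold aget
    rw [dif_pos (by omega)]
    exact h ⟨t, by omega⟩ ht
  apply sum_vanish ((n-1)*(r-1)+1) (by omega)
    (fun k => ∏ t ∈ Finset.range (n - 1),
      Acoef r ((k : ℤ) - (∑ u ∈ Finset.range t, (aget a u : ℤ))) (r - aget a t))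
  apply good_eq (d := (n-1)*(r-1)) _ (by omega)
  apply good_prod (n-1) (r-1)
    (fun t k => Acoef r ((k : ℤ) - (∑ u ∈ Finset.range t, (aget a u : ℤ))) (r - aget a t))
  intro t ht
  have h1 : aget a t ≤ r - 1 := ha2 t ht
  exact good_Acoef r (∑ u ∈ Finset.range t, (aget a u : ℤ)) (r - aget a t) (by omega) (by omega)
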